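/- Let h : Ω → R be measurable with h ≥ 0 μ-a.e. on {x_a = x} and h ≤ 0 μ-a.e. on {x_b = x}, where x ∈ K := {x ∈ L^p(μ) : x_a ≤ x ≤ x_b μ-a.e.}, h ∈ L^p(μ), p ∈ [1,∞). Define h_k by h_k(ω) = 0 if x(ω) ∈ (x_a(ω), x_a(ω)+1/k) ∪ (x_b(ω)−1/k, x_b(ω)) or |h(ω)| > k, and h_k(ω) = h(ω) otherwise. Then x + h_k/k² ∈ K for all k and h_k → h in L^p(μ). -/

import Mathlib

open MeasureTheory Filter Topology Pointwise
open scoped ENNReal Classical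

noncomputable section

/-- Bouligand tangent cone of a set `C` at `x`. -/
def bouligandTangentCone {E : Type*} [NormedAddCommGroup E] [NormedSpace ℝ E]
    (C : Set E) (x : E) : Set E :=
  {d | ∃ (xs : ℕ → E) (t : ℕ → ℝ), (∀ k, xs k ∈ C) ∧ (∀ k, 0 < t k) ∧
      Tendsto xs atTop (𝓝 x) ∧ Tendsto t atTop (𝓝 0) ∧
      Tendsto (fun k => (t k)⁻¹ • (xs k - x)) atTop (𝓝 d)}

/-- The duality pairing between `L^q(μ)` and `L^p(μ)`. -/
def pairing {Ω : Type*} [MeasurableSpace Ω] (μ : Measure Ω) {q p : ℝ≥0∞}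
    (y : Lp ℝ q μ) (x : Lp ℝ p μ) : ℝ := ∫ ω, y ω * x ω ∂μ

/-- The polar of a subset of `L^p(μ)`, taken in `L^q(μ)`. -/
def polarCone {Ω : Type*} [MeasurableSpace Ω] (μ : Measure Ω) (p q : ℝ≥0∞)
    (S : Set (Lp ℝ p μ)) : Set (Lp ℝ q μ) :=
  {y | ∀ s ∈ S, pairing μ y s ≤ 0}

/-- The normal cone: polar of the Bouligand tangent cone, taken in `L^q(μ)`. -/
def normalCone {Ω : Type*} [MeasurableSpace Ω] (μ : Measure Ω) (p q : ℝ≥0∞)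
    [Fact (1 ≤ p)] (C : Set (Lp ℝ p μ)) (x : Lp ℝ p μ) : Set (Lp ℝ q μ) :=
  polarCone μ p q (bouligandTangentCone C x)

private lemma ereal_lt_add_iff (a : EReal) (x c : ℝ) :
    (x : EReal) < a + (c : EReal) ↔ ((x - c : ℝ) : EReal) < a := by
  induction a using EReal.rec with
  | bot => simp [EReal.bot_add]
  | coe a =>
      rw [← EReal.coe_add, EReal.coe_lt_coe_iff, EReal.coe_lt_coe_iff]
      constructor <;> intro <;> linarith
  | top =>
      rw [EReal.top_add_coe]
      simp only [iff_true_intro (EReal.coe_lt_top _)]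

private lemma ereal_sub_lt_iff (b : EReal) (x c : ℝ) :
    b - (c : EReal) < (x : EReal) ↔ b < ((x + c : ℝ) : EReal) := by
  induction b using EReal.rec with
  | bot => simp [EReal.bot_sub]
  | coe b =>
      rw [← EReal.coe_sub, EReal.coe_lt_coe_iff, EReal.coe_lt_coe_iff]
      constructor <;> intro <;> linarith
  | top =>
      rw [EReal.top_sub_coe]
      simp only [iff_false_intro (not_top_lt), iff_false_intro (EReal.coe_lt_top _).ne']

theorem approximating_sequence_for_tangent_cone
    {Ω : Type*} [MeasurableSpace Ω] (μ : Measure Ω) [SigmaFinite μ]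
    (p : ℝ≥0∞) [Fact (1 ≤ p)] (hp : 1 ≤ p) (hp' : p ≠ ∞)
    (xa xb : Ω → EReal) (hxa : Measurable xa) (hxb : Measurable xb)
    (x : Lp ℝ p μ)
    (hxK : ∀ᵐ ω ∂μ, xa ω ≤ (x ω : EReal) ∧ (x ω : EReal) ≤ xb ω)
    (h : Ω → ℝ) (hmeas : Measurable h) (hmem : MemLp h p μ)
    (hsign_a : ∀ᵐ ω ∂μ, xa ω = (x ω : EReal) → 0 ≤ h ω)
    (hsign_b : ∀ᵐ ω ∂μ, xb ω = (x ω : EReal) → h ω ≤ 0)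
    (hk : ℕ → Ω → ℝ)
    (hkdef : ∀ (k : ℕ) (ω : Ω), hk k ω =
      if ((xa ω < (x ω : EReal) ∧ (x ω : EReal) < xa ω + ((1 / (k : ℝ)) : EReal)) ∨
          (xb ω - ((1 / (k : ℝ)) : EReal) < (x ω : EReal) ∧ (x ω : EReal) < xb ω)) ∨
         (k : ℝ) < |h ω|
      then 0 else h ω) :
    (∀ k : ℕ, 1 ≤ k →
      MemLp (fun ω => x ω + hk k ω / (k : ℝ) ^ 2) p μ ∧
      (∀ᵐ ω ∂μ, xa ω ≤ ((x ω + hk k ω / (k : ℝ) ^ 2 : ℝ) : EReal) ∧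
        ((x ω + hk k ω / (k : ℝ) ^ 2 : ℝ) : EReal) ≤ xb ω)) ∧
    Tendsto (fun k : ℕ => eLpNorm (fun ω => hk k ω - h ω) p μ) atTop (𝓝 0) := by
  
  classical
  have hx : Measurable (⇑x) := (Lp.stronglyMeasurable x).measurable
  have hp0 : p ≠ 0 := fun h0 => by simp [h0] at hp
  have hpt_pos : 0 < p.toReal := ENNReal.toReal_pos hp0 hp'
  have hcoe : ∀ k : ℕ, ((1 / (k : ℝ)) : EReal) = ((1/(k:ℝ) : ℝ) : EReal) := fun k => by
    rw [EReal.coe_div, EReal.coe_one]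
  simp only [hcoe] at hkdef
  have hCmeas : ∀ k : ℕ, MeasurableSet {ω |
      ((xa ω < (x ω : EReal) ∧ (x ω : EReal) < xa ω + ((1/(k:ℝ) : ℝ) : EReal)) ∨
        (xb ω - ((1/(k:ℝ) : ℝ) : EReal) < (x ω : EReal) ∧ (x ω : EReal) < xb ω)) ∨
      (k : ℝ) < |h ω|} := by
    intro k
    have h1 : MeasurableSet {ω | xa ω < (x ω : EReal)} :=
      measurableSet_lt hxa (measurable_coe_real_ereal.comp hx)
    have h2 : MeasurableSet {ω | ((x ω - 1/(k:ℝ) : ℝ) : EReal) < xa ω} :=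
      measurableSet_lt (measurable_coe_real_ereal.comp (hx.sub measurable_const)) hxa
    have h3 : MeasurableSet {ω | xb ω < ((x ω + 1/(k:ℝ) : ℝ) : EReal)} :=
      measurableSet_lt hxb (measurable_coe_real_ereal.comp (hx.add measurable_const))
    have h4 : MeasurableSet {ω | (x ω : EReal) < xb ω} :=
      measurableSet_lt (measurable_coe_real_ereal.comp hx) hxb
    have h5 : MeasurableSet {ω | (k:ℝ) < |h ω|} :=
      measurableSet_lt measurable_const hmeas.abs
    have hset : {ω |
        ((xa ω < (x ω : EReal) ∧ (x ω : EReal) < xa ω + ((1/(k:ℝ) : ℝ) : EReal)) ∨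
          (xb ω - ((1/(k:ℝ) : ℝ) : EReal) < (x ω : EReal) ∧ (x ω : EReal) < xb ω)) ∨
        (k : ℝ) < |h ω|} =
        (({ω | xa ω < (x ω : EReal)} ∩ {ω | ((x ω - 1/(k:ℝ) : ℝ) : EReal) < xa ω}) ∪
         ({ω | xb ω < ((x ω + 1/(k:ℝ) : ℝ) : EReal)} ∩ {ω | (x ω : EReal) < xb ω})) ∪
        {ω | (k:ℝ) < |h ω|} := by
      ext ω
      simp only [Set.mem_setOf_eq, Set.mem_union, Set.mem_inter_iff]
      rw [ereal_lt_add_iff, ereal_sub_lt_iff]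
    rw [hset]
    exact ((h1.inter h2).union (h3.inter h4)).union h5
  have hkmeas : ∀ k, Measurable (hk k) := by
    intro k
    have : hk k = fun ω => if
        ((xa ω < (x ω : EReal) ∧ (x ω : EReal) < xa ω + ((1/(k:ℝ) : ℝ) : EReal)) ∨
          (xb ω - ((1/(k:ℝ) : ℝ) : EReal) < (x ω : EReal) ∧ (x ω : EReal) < xb ω)) ∨
        (k : ℝ) < |h ω| then 0 else h ω := funext (hkdef k)
    rw [this]
    exact Measurable.ite (hCmeas k) measurable_const hmeas
  have hkabs : ∀ k ω, |hk k ω| ≤ |h ω| := by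
    intro k ω; rw [hkdef]
    split
    · simp [abs_nonneg]
    · exact le_refl _
  have hkmem : ∀ k, MemLp (hk k) p μ := by
    intro k
    exact hmem.of_le (hkmeas k).aestronglyMeasurable
      (Eventually.of_forall fun ω => by simpa [Real.norm_eq_abs] using hkabs k ω)
  constructor
  · intro k hk1
    have hkpos : (0:ℝ) < (k:ℝ) := by exact_mod_cast hk1
    have hkne : ((k:ℝ)) ≠ 0 := ne_of_gt hkpos
    have hk2pos : (0:ℝ) < (k:ℝ)^2 := by positivity
    refine ⟨?_, ?_⟩
    · have hmem2 : MemLp (fun ω => hk k ω / (k:ℝ)^2) p μ := by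
        simpa [div_eq_inv_mul] using (hkmem k).const_mul ((k:ℝ)^2)⁻¹
      exact (Lp.memLp x).add hmem2
    · filter_upwards [hxK, hsign_a, hsign_b] with ω hω hsa hsb
      rw [hkdef]
      split_ifs with hc
      · simpa using hω
      · push_neg at hc
        obtain ⟨⟨hca, hcb⟩, hch⟩ := hc
        have habs := abs_le.1 hch
        have hdivle : h ω / (k:ℝ)^2 ≤ 1/(k:ℝ) := by
          have h2 : h ω / (k:ℝ)^2 ≤ (k:ℝ) / (k:ℝ)^2 := by
            exact div_le_div_of_nonneg_right habs.2 hk2pos.le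
          have h3 : (k:ℝ) / (k:ℝ)^2 = 1/(k:ℝ) := by
            field_simp [sq]
          linarith
        have hdivge : -(1/(k:ℝ)) ≤ h ω / (k:ℝ)^2 := by
          have h2 : -(k:ℝ) / (k:ℝ)^2 ≤ h ω / (k:ℝ)^2 :=
            div_le_div_of_nonneg_right habs.1 hk2pos.le
          have h3 : -(k:ℝ) / (k:ℝ)^2 = -(1/(k:ℝ)) := by
            field_simp [sq]
          linarith
        constructor
        · rcases eq_or_lt_of_le hω.1 with heq | hlt
          · have hh := hsa heq
            rw [heq]
            have hdn : 0 / (k:ℝ)^2 ≤ h ω / (k:ℝ)^2 :=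
              div_le_div_of_nonneg_right hh hk2pos.le
            rw [zero_div] at hdn
            exact EReal.coe_le_coe_iff.2 (by linarith)
          · have hle := hca hlt
            clear hca hcb hsa hsb hω
            revert hlt hle
            induction xa ω using EReal.rec with
            | bot => intro _ _; exact bot_le
            | coe a =>
                intro hlt hle
                rw [← EReal.coe_add] at hle
                have h1 : a + 1/(k:ℝ) ≤ x ω := EReal.coe_le_coe_iff.1 hle
                exact EReal.coe_le_coe_iff.2 (by linarith)
            | top => intro hlt _; exact absurd hlt not_top_lt
        · rcases eq_or_lt_of_le hω.2 with heq | hlt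
          · have hh := hsb heq.symm
            rw [← heq]
            have hdn : h ω / (k:ℝ)^2 ≤ 0 / (k:ℝ)^2 :=
              div_le_div_of_nonneg_right hh hk2pos.le
            rw [zero_div] at hdn
            exact EReal.coe_le_coe_iff.2 (by linarith)
          · have hle : (x ω : EReal) ≤ xb ω - ((1/(k:ℝ) : ℝ) : EReal) := by
              by_contra hq
              exact absurd (hcb (not_le.1 hq)) (not_le.2 hlt)
            clear hca hcb hsa hsb hω
            revert hlt hle
            induction xb ω using EReal.rec with
            | bot => intro hlt _; exact absurd hlt not_lt_bot
            | coe b =>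
                intro hlt hle
                rw [← EReal.coe_sub] at hle
                have h1 : x ω ≤ b - 1/(k:ℝ) := EReal.coe_le_coe_iff.1 hle
                exact EReal.coe_le_coe_iff.2 (by linarith)
            | top => intro _ _; exact le_top
  · have hptwise : ∀ᵐ ω ∂μ, ∀ᶠ k : ℕ in atTop, hk k ω = h ω := by
      filter_upwards [hxK] with ω hω
      have E3 : ∀ᶠ k : ℕ in atTop, ¬ ((k:ℝ) < |h ω|) := by
        filter_upwards [tendsto_natCast_atTop_atTop.eventually_ge_atTop (|h ω|)] with k hk'
        exact not_lt.2 hk'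
      have E1 : ∀ᶠ k : ℕ in atTop,
          ¬ (xa ω < (x ω : EReal) ∧ (x ω : EReal) < xa ω + ((1/(k:ℝ) : ℝ) : EReal)) := by
        by_cases hlt : xa ω < (x ω : EReal)
        · revert hlt
          induction xa ω using EReal.rec with
          | bot =>
              intro _
              refine Eventually.of_forall fun k => ?_
              rintro ⟨-, hq⟩
              rw [EReal.bot_add] at hq
              exact not_lt_bot hq
          | coe a =>
              intro hlt
              have hax : a < x ω := EReal.coe_lt_coe_iff.1 hlt
              have hev : ∀ᶠ k : ℕ in atTop, 1/(k:ℝ) ≤ x ω - a :=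
                tendsto_one_div_atTop_nhds_zero_nat.eventually
                  (eventually_le_nhds (by linarith))
              filter_upwards [hev] with k hk'
              rintro ⟨-, hq⟩
              rw [← EReal.coe_add] at hq
              have := EReal.coe_lt_coe_iff.1 hq
              linarith
          | top => intro hlt; exact absurd hlt not_top_lt
        · exact Eventually.of_forall fun k hq => hlt hq.1
      have E2 : ∀ᶠ k : ℕ in atTop,
          ¬ (xb ω - ((1/(k:ℝ) : ℝ) : EReal) < (x ω : EReal) ∧ (x ω : EReal) < xb ω) := by
        by_cases hlt : (x ω : EReal) < xb ω
        · revert hlt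
          induction xb ω using EReal.rec with
          | bot => intro hlt; exact absurd hlt not_lt_bot
          | coe b =>
              intro hlt
              have hbx : x ω < b := EReal.coe_lt_coe_iff.1 hlt
              have hev : ∀ᶠ k : ℕ in atTop, 1/(k:ℝ) ≤ b - x ω :=
                tendsto_one_div_atTop_nhds_zero_nat.eventually
                  (eventually_le_nhds (by linarith))
              filter_upwards [hev] with k hk'
              rintro ⟨hq, -⟩
              rw [← EReal.coe_sub] at hq
              have := EReal.coe_lt_coe_iff.1 hq
              linarith
          | top =>
              intro _
              refine Eventually.of_forall fun k => ?_
              rintro ⟨hq, -⟩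
              rw [EReal.top_sub_coe] at hq
              exact not_top_lt hq
        · exact Eventually.of_forall fun k hq => hlt hq.2
      filter_upwards [E1, E2, E3] with k h1 h2 h3
      rw [hkdef, if_neg]
      rintro ((hq | hq) | hq)
      exacts [h1 hq, h2 hq, h3 hq]
    have hlim : Tendsto (fun k => ∫⁻ ω, (‖hk k ω - h ω‖₊ : ℝ≥0∞) ^ p.toReal ∂μ)
        atTop (𝓝 (∫⁻ _ω, (0:ℝ≥0∞) ∂μ)) := by
      refine tendsto_lintegral_of_dominated_convergence
        (fun ω => (‖h ω‖₊ : ℝ≥0∞) ^ p.toReal) (fun k => ?_) (fun k => ?_) ?_ ?_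
      · exact (ENNReal.continuous_rpow_const.measurable).comp ((hkmeas k).sub hmeas).nnnorm.coe_nnreal_ennreal
      · refine Eventually.of_forall fun ω => ?_
        refine ENNReal.rpow_le_rpow ?_ hpt_pos.le
        refine ENNReal.coe_le_coe.2 ?_
        rw [hkdef]
        split
        · simp
        · simp
      · exact (lintegral_rpow_enorm_lt_top_of_eLpNorm_lt_top hp0 hp'
          hmem.eLpNorm_lt_top).ne
      · filter_upwards [hptwise] with ω hω
        have heq : ∀ᶠ k : ℕ in atTop,
            (‖hk k ω - h ω‖₊ : ℝ≥0∞) ^ p.toReal = 0 := by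
          filter_upwards [hω] with k hk'
          simp [hk', ENNReal.zero_rpow_of_pos hpt_pos]
        exact (tendsto_congr' heq).2 tendsto_const_nhds
    rw [lintegral_zero] at hlim
    have hfinal := ((ENNReal.continuous_rpow_const (y := 1/p.toReal)).tendsto 0).comp hlim
    simp only [Function.comp_def] at hfinal
    rw [ENNReal.zero_rpow_of_pos (by positivity : 0 < 1/p.toReal)] at hfinal
    refine hfinal.congr fun k => ?_
    rw [eLpNorm_eq_lintegral_rpow_enorm_toReal hp0 hp']
    rfl
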